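/- Let K be an ordered field and P a nontrivial finitely generated additive submonoid of K≥0. Then P can be generated by an unbounded increasing sequence if and only if K is Archimedean. -/

import Mathlib

theorem fg_strongly_increasing_iff_archimedean {K : Type*} [Field K] [LinearOrder K] [IsStrictOrderedRing K]
    (P : AddSubmonoid K) (hP : ∀ x ∈ P, 0 ≤ x) (hnt : P ≠ ⊥) (hfg : P.FG) :
    (∃ u : ℕ → K, Monotone u ∧ (∀ n, 0 ≤ u n) ∧
        AddSubmonoid.closure (Set.range u) = P ∧ ∀ x : K, ∃ n : ℕ, x < u n) ↔
      (∀ x : K, ∃ n : ℕ, x < (n : K)) := by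
  obtain ⟨S, hS⟩ := hfg
  -- S nonempty
  have hSne : S.Nonempty := by
    rcases S.eq_empty_or_nonempty with h | h
    · exfalso; apply hnt; rw [← hS, h]; simp
    · exact h
  set M := S.max' hSne with hM
  have hMS : M ∈ (S : Set K) := S.max'_mem hSne
  have hMP : M ∈ P := hS ▸ AddSubmonoid.subset_closure hMS
  have hSP : (S : Set K) ⊆ P := hS ▸ AddSubmonoid.subset_closure
  have hle : ∀ s ∈ (S : Set K), s ≤ M := fun s hs => S.le_max' s hs
  have hMpos : 0 < M := by
    rcases lt_or_ge 0 M with h | h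
    · exact h
    · exfalso
      apply hnt
      rw [← hS]
      have : (S : Set K) ⊆ {0} := by
        intro s hs
        exact Set.mem_singleton_iff.mpr (le_antisymm (le_trans (hle s hs) h) (hP s (hSP hs)))
      have h1 : AddSubmonoid.closure (S : Set K) ≤ AddSubmonoid.closure {0} :=
        AddSubmonoid.closure_mono this
      have h2 : AddSubmonoid.closure ({0} : Set K) = ⊥ := AddSubmonoid.closure_singleton_zero
      exact le_bot_iff.mp (h2 ▸ h1)
  constructor
  · rintro ⟨u, hmono, hnn, hclos, hub⟩ x
    obtain ⟨n, hn⟩ := hub (x * M)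
    have hun : u n ∈ P := by
      rw [← hclos]; exact AddSubmonoid.subset_closure ⟨n, rfl⟩
    rw [← hS] at hun
    obtain ⟨l, hl, hsum⟩ := AddSubmonoid.exists_list_of_mem_closure hun
    have hbound : u n ≤ (l.length : K) * M := by
      rw [← hsum]
      have := List.sum_le_card_nsmul l M (fun s hs => hle s (hl s hs))
      rwa [nsmul_eq_mul] at this
    have : x * M < (l.length : K) * M := lt_of_lt_of_le hn hbound
    exact ⟨l.length, lt_of_mul_lt_mul_right this hMpos.le⟩
  · intro harch
    set L := S.sort (· ≤ ·) with hL
    set k := L.length with hk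
    have hkpos : 0 < k := by
      rw [hk, hL, Finset.length_sort]
      exact Finset.card_pos.mpr hSne
    set u : ℕ → K := fun n => if h : n < k then L.get ⟨n, h⟩ else (n - k + 2) • M with hu
    have hmemL : ∀ i : Fin L.length, L.get i ∈ (S : Set K) := by
      intro i
      have : L.get i ∈ L := L.get_mem i
      exact (Finset.mem_sort _).mp this
    have huP : ∀ n, u n ∈ P := by
      intro n
      rw [hu]
      by_cases h : n < k
      · simp only [h, dif_pos]
        exact hSP (hmemL _)
      · simp only [h, dif_neg]
        exact AddSubmonoid.nsmul_mem P hMP _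
    refine ⟨u, ?_, fun n => hP _ (huP n), ?_, ?_⟩
    · apply monotone_nat_of_le_succ
      intro n
      rw [hu]
      by_cases h1 : n + 1 < k
      · have h0 : n < k := Nat.lt_of_succ_lt h1
        simp only [h0, h1, dif_pos]
        have hsorted : L.Pairwise (· ≤ ·) := Finset.pairwise_sort _ _
        exact hsorted.rel_get_of_lt (by simp)
      · by_cases h0 : n < k
        · simp only [h0, h1, dif_pos, dif_neg]
          have : n + 1 = k := by omega
          have h2 : n + 1 - k + 2 = 2 := by omega
          rw [h2]
          calc L.get ⟨n, h0⟩ ≤ M := hle _ (hmemL _)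
            _ ≤ (2 : ℕ) • M := by rw [two_nsmul]; linarith
        · simp only [h0, h1, dif_neg]
          apply nsmul_le_nsmul_left hMpos.le
          omega
    · apply le_antisymm
      · rw [AddSubmonoid.closure_le]
        rintro _ ⟨n, rfl⟩
        exact huP n
      · rw [← hS, AddSubmonoid.closure_le]
        intro s hs
        have : s ∈ L := (Finset.mem_sort _).mpr hs
        obtain ⟨i, hi⟩ := List.get_of_mem this
        apply AddSubmonoid.subset_closure
        refine ⟨i, ?_⟩
        rw [hu]
        simp only [i.isLt, dif_pos]
        rw [← hi]
        exact dif_pos i.isLt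
    · intro x
      obtain ⟨m, hm⟩ := harch (x / M)
      refine ⟨m + k, ?_⟩
      rw [hu]
      have h : ¬ (m + k < k) := by omega
      simp only [h, dif_neg]
      have h2 : m + k - k + 2 = m + 2 := by omega
      rw [h2]
      have hxm : x < m * M := by
        rw [div_lt_iff₀ hMpos] at hm
        linarith
      calc x < m * M := hxm
        _ ≤ (m + 2 : ℕ) • M := by
            rw [nsmul_eq_mul]; push_cast; nlinarith
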